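/- Let q ≥ 4 be a prime power, n ∈ ℕ, and S ⊆ {0,1,...,n} nonempty. Then the indicator function δ_S : Z/(q^n−1)Z → F_p of Ω(S) has maximum least period q^n − 1. For q = 3 the same holds provided S ≠ {0, n}. -/

import Mathlib

/-- `inOmega q n w j` : `j` is a sum of `w` distinct `q`-powers `q^i` with `0 ≤ i ≤ n-1`. -/
def inOmega (q n w j : ℕ) : Prop :=
  ∃ s : Finset (Fin n), s.card = w ∧ j = ∑ i ∈ s, q ^ (i : ℕ)

open scoped Classical in
/-- The indicator function `δ_S : ℤ/(qⁿ-1)ℤ → 𝔽_p` of `Ω(S) = ⋃_{w ∈ S} Ω(w)`. -/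
noncomputable def deltaS (p q n : ℕ) (S : Finset ℕ) (k : ZMod (q ^ n - 1)) : ZMod p :=
  if ∃ w ∈ S, inOmega q n w k.val then 1 else 0

/-- `f : ℤ/Nℤ → α` is `r`-periodic if `f(i + r) = f(i)` for all `i`. -/
def IsPeriodicZMod {N : ℕ} {α : Type*} (f : ZMod N → α) (r : ℕ) : Prop :=
  ∀ i : ZMod N, f (i + (r : ZMod N)) = f i

/-- The least period of `f : ℤ/Nℤ → α`. -/
noncomputable def leastPeriod {N : ℕ} {α : Type*} (f : ZMod N → α) : ℕ :=
  sInf {r : ℕ | 0 < r ∧ IsPeriodicZMod f r}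

/-- Periodicity is preserved under integer multiples. -/
lemma periodic_zsmul {N : ℕ} {α : Type*} (f : ZMod N → α) (r : ℕ)
    (h : IsPeriodicZMod f r) (z : ℤ) (i : ZMod N) :
    f (i + (z : ZMod N) * (r : ZMod N)) = f i := by
  induction z using Int.induction_on with
  | zero => simp
  | succ k ih =>
      have h1 := h (i + ((k : ℤ) : ZMod N) * (r : ZMod N))
      have e1 : i + (((k : ℤ) + 1 : ℤ) : ZMod N) * (r : ZMod N)
          = i + ((k : ℤ) : ZMod N) * (r : ZMod N) + (r : ZMod N) := by
        push_cast; ring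
      rw [e1, h1, ih]
  | pred k ih =>
      have h1 := h (i + ((-(k : ℤ) - 1 : ℤ) : ZMod N) * (r : ZMod N))
      have e1 : i + ((-(k : ℤ) - 1 : ℤ) : ZMod N) * (r : ZMod N) + (r : ZMod N)
          = i + ((-(k : ℤ) : ℤ) : ZMod N) * (r : ZMod N) := by
        push_cast; ring
      rw [e1] at h1
      rw [← h1]
      exact ih

/-- If `r` is a period, so is `gcd r N`. -/
lemma periodic_gcd {N : ℕ} {α : Type*} (f : ZMod N → α) (r : ℕ)
    (h : IsPeriodicZMod f r) : IsPeriodicZMod f (Nat.gcd r N) := by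
  intro i
  have h1 : ((Nat.gcd r N : ℕ) : ZMod N)
      = ((Nat.gcdA r N : ℤ) : ZMod N) * (r : ZMod N) := by
    have hcast : (((Nat.gcd r N : ℤ)) : ZMod N)
        = (((r : ℤ) * Nat.gcdA r N + (N : ℤ) * Nat.gcdB r N : ℤ) : ZMod N) := by
      rw [← Nat.gcd_eq_gcd_ab]
    push_cast at hcast
    rw [ZMod.natCast_self, zero_mul, add_zero] at hcast
    rw [hcast]; ring
  rw [h1]
  exact periodic_zsmul f r h (Nat.gcdA r N) i

/-- Periodicity is preserved under natural multiples (translate by `d*c`). -/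
lemma periodic_nat_mul {N : ℕ} {α : Type*} (f : ZMod N → α) (d : ℕ)
    (h : IsPeriodicZMod f d) (c x : ℕ) :
    f ((x + d * c : ℕ) : ZMod N) = f ((x : ℕ) : ZMod N) := by
  induction c with
  | zero => simp
  | succ c ih =>
      have e : ((x + d * (c + 1) : ℕ) : ZMod N)
          = ((x + d * c : ℕ) : ZMod N) + (d : ZMod N) := by
        push_cast; ring
      rw [e, h, ih]

/-- Geometric sum identity in `ℕ`. -/
lemma geom_aux (q : ℕ) (hq : 1 ≤ q) (n : ℕ) :
    (q - 1) * (∑ i ∈ Finset.range n, q ^ i) + 1 = q ^ n := by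
  induction n with
  | zero => simp
  | succ n ih =>
      rw [Finset.sum_range_succ, Nat.mul_add, pow_succ]
      calc (q - 1) * (∑ i ∈ Finset.range n, q ^ i) + (q - 1) * q ^ n + 1
          = ((q - 1) * (∑ i ∈ Finset.range n, q ^ i) + 1) + (q - 1) * q ^ n := by ring
        _ = q ^ n + (q - 1) * q ^ n := by rw [ih]
        _ = (q - 1 + 1) * q ^ n := by ring
        _ = q ^ n * q := by rw [Nat.sub_add_cancel hq, mul_comm]

/-- Landing in the top block of a residue class mod `d`. -/
lemma arith_aux (d N x : ℕ) (hd : 0 < d) (hdN : d ∣ N) (hx : x < N) :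
    ∃ c y, x + d * c = y ∧ N ≤ y + d ∧ y < N := by
  obtain ⟨m, rfl⟩ := hdN
  obtain ⟨a, b, hb, rfl⟩ : ∃ a b, b < d ∧ x = d * a + b :=
    ⟨x / d, x % d, Nat.mod_lt _ hd, (Nat.div_add_mod x d).symm⟩
  have ha : a < m := by
    by_contra hcon
    push_neg at hcon
    have h1 : d * m ≤ d * a := Nat.mul_le_mul_left d hcon
    omega
  obtain ⟨c, rfl⟩ : ∃ c, m = a + 1 + c := ⟨m - a - 1, by omega⟩
  refine ⟨c, d * a + b + d * c, rfl, ?_, ?_⟩ <;>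
  · have he : d * (a + 1 + c) = d * a + d * c + d := by ring
    omega

/-- Evaluation of the indicator at a canonical representative. -/
lemma deltaS_eq_one_iff (p q n : ℕ) [Fact p.Prime] (S : Finset ℕ) (x : ℕ)
    (hx : x < q ^ n - 1) :
    (deltaS p q n S ((x : ℕ) : ZMod (q ^ n - 1)) = 1 ↔ ∃ w ∈ S, inOmega q n w x) := by
  haveI : NeZero (q ^ n - 1) := ⟨by omega⟩
  unfold deltaS
  rw [ZMod.val_cast_of_lt hx]
  by_cases hC : ∃ w ∈ S, inOmega q n w x
  · simp [hC]
  · simp [hC]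

theorem delta_max_period_ge_three (p a q n : ℕ) (hp : p.Prime) (ha : 0 < a)
    (hq : q = p ^ a) (hq3 : 3 ≤ q) (hn : 1 ≤ n)
    (S : Finset ℕ) (hS : S.Nonempty) (hSn : S ⊆ Finset.range (n + 1))
    (hq3S : q = 3 → S ≠ {0, n}) :
    leastPeriod (deltaS p q n S) = q ^ n - 1 := by
  haveI : Fact p.Prime := ⟨hp⟩
  set N := q ^ n - 1 with hN
  set f := deltaS p q n S with hf
  set U := ∑ i ∈ Finset.range n, q ^ i with hU
  have hgeom := geom_aux q (by omega) n
  have hNU : N = (q - 1) * U := by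
    rw [hN, ← hU] at *
    omega
  have hU1 : 1 ≤ U := by
    calc 1 = q ^ 0 := (pow_zero q).symm
      _ ≤ U := Finset.single_le_sum (fun i _ => Nat.zero_le _) (Finset.mem_range.mpr hn)
  have h2UN : 2 * U ≤ N := by
    rw [hNU]
    exact Nat.mul_le_mul_right U (by omega)
  have hUN : U < N := by omega
  have hN2 : 2 ≤ N := by omega
  haveI : NeZero N := ⟨by omega⟩
  -- evaluation of the indicator
  have hUb : ∀ s : Finset (Fin n), (∑ i ∈ s, q ^ (i : ℕ)) ≤ U := by
    intro s
    calc (∑ i ∈ s, q ^ (i : ℕ)) ≤ ∑ i ∈ (Finset.univ : Finset (Fin n)), q ^ (i : ℕ) :=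
          Finset.sum_le_sum_of_subset (Finset.subset_univ s)
      _ = U := by rw [Fin.sum_univ_eq_sum_range (fun i => q ^ i) n]
  have hΩb : ∀ x : ℕ, (∃ w ∈ S, inOmega q n w x) → x ≤ U := by
    rintro x ⟨w, hw, s, hcard, rfl⟩
    exact hUb s
  have hiff : ∀ x : ℕ, x < N → (f ((x : ℕ) : ZMod N) = 1 ↔ ∃ w ∈ S, inOmega q n w x) := by
    intro x hx
    exact deltaS_eq_one_iff p q n S x (by omega)
  -- main step: every positive period is at least N
  have key : ∀ r : ℕ, 0 < r → IsPeriodicZMod f r → N ≤ r := by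
    intro r hr hper
    by_contra hlt
    push_neg at hlt
    set d := Nat.gcd r N with hd
    have hdper : IsPeriodicZMod f d := periodic_gcd f r hper
    have hd0 : 0 < d := Nat.gcd_pos_of_pos_left _ hr
    have hdr : d ≤ r := Nat.le_of_dvd hr (Nat.gcd_dvd_left r N)
    have hdN : d ∣ N := Nat.gcd_dvd_right r N
    have hdltN : d < N := lt_of_le_of_lt hdr hlt
    have h2d : 2 * d ≤ N := by
      obtain ⟨m, hm⟩ := hdN
      have hm2 : 2 ≤ m := by
        rcases Nat.lt_or_ge m 2 with h | h
        · interval_cases m <;> omega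
        · exact h
      calc 2 * d = d * 2 := by ring
        _ ≤ d * m := Nat.mul_le_mul_left d hm2
        _ = N := hm.symm
    -- an element of Ω(S)
    obtain ⟨w, hwS⟩ := hS
    have hwn : w ≤ n := by
      have := hSn hwS
      simp only [Finset.mem_range] at this
      omega
    obtain ⟨t, -, htcard⟩ := Finset.exists_subset_card_eq
      (show w ≤ (Finset.univ : Finset (Fin n)).card by simpa using hwn)
    set x := ∑ i ∈ t, q ^ (i : ℕ) with hx
    have hxU : x ≤ U := hUb t
    have hxN : x < N := lt_of_le_of_lt hxU hUN
    have hfx : f ((x : ℕ) : ZMod N) = 1 := (hiff x hxN).mpr ⟨w, hwS, t, htcard, rfl⟩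
    obtain ⟨c, y, hcy, hyd, hyN⟩ := arith_aux d N x hd0 hdN hxN
    have hfy : f ((y : ℕ) : ZMod N) = 1 := by
      have hmul := periodic_nat_mul f d hdper c x
      rw [hcy] at hmul
      rw [hmul]; exact hfx
    have hyU : y ≤ U := hΩb y ((hiff y hyN).mp hfy)
    have hN2U' : N = 2 * U := by omega
    have hdU : d = U := by omega
    have hyU' : y = U := by omega
    -- n ∈ S
    have hUmem := (hiff y hyN).mp hfy
    rw [hyU'] at hUmem
    have hnS : n ∈ S := by
      obtain ⟨w', hw'S, s', hs'c, hs's⟩ := hUmem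
      have hs'univ : s' = Finset.univ := by
        by_contra hne
        obtain ⟨i, hi⟩ : ∃ i : Fin n, i ∉ s' := by
          by_contra hall
          push_neg at hall
          exact hne (Finset.eq_univ_iff_forall.mpr hall)
        have hlt2 := Finset.sum_lt_sum_of_subset (f := fun j : Fin n => q ^ (j : ℕ))
          (Finset.subset_univ s') (Finset.mem_univ i) hi
          (pow_pos (show 0 < q by omega) (i : ℕ)) (fun j _ _ => Nat.zero_le _)
        rw [Fin.sum_univ_eq_sum_range (fun i => q ^ i) n, ← hU, ← hs's] at hlt2
        exact lt_irrefl _ hlt2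
      rw [hs'univ] at hs'c
      simp only [Finset.card_univ, Fintype.card_fin] at hs'c
      rw [hs'c]; exact hw'S
    -- 0 ∈ S
    have hfU : f ((U : ℕ) : ZMod N) = 1 := by rw [← hyU']; exact hfy
    have hf0 : f ((0 : ℕ) : ZMod N) = 1 := by
      have h1 := hdper ((U : ℕ) : ZMod N)
      rw [hdU] at h1
      have hUU : ((U : ℕ) : ZMod N) + ((U : ℕ) : ZMod N) = ((0 : ℕ) : ZMod N) := by
        have h2 : ((2 * U : ℕ) : ZMod N) = 0 := by
          rw [← hN2U']; exact ZMod.natCast_self N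
        push_cast at h2 ⊢
        rw [← two_mul]; exact h2
      rw [hUU] at h1
      rw [h1]; exact hfU
    have h0S : (0 : ℕ) ∈ S := by
      have h0N : (0 : ℕ) < N := by omega
      obtain ⟨w0, hw0, s0, hs0c, hs0s⟩ := (hiff 0 h0N).mp hf0
      have hs0 : s0 = ∅ := by
        by_contra hne
        have hpos := Finset.sum_pos
          (fun i (_ : i ∈ s0) => pow_pos (show 0 < q by omega) (i : ℕ))
          (Finset.nonempty_of_ne_empty hne)
        omega
      rw [hs0, Finset.card_empty] at hs0c
      rw [hs0c]; exact hw0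
    -- every weight in S is 0 or n
    have hwall : ∀ w' ∈ S, w' = 0 ∨ w' = n := by
      intro w' hw'
      by_contra hcon
      push_neg at hcon
      obtain ⟨hw'0, hw'n⟩ := hcon
      have hw'le : w' ≤ n := by
        have := hSn hw'
        simp only [Finset.mem_range] at this
        omega
      obtain ⟨t', -, ht'c⟩ := Finset.exists_subset_card_eq
        (show w' ≤ (Finset.univ : Finset (Fin n)).card by simpa using hw'le)
      set z := ∑ i ∈ t', q ^ (i : ℕ) with hz
      have hz1 : 1 ≤ z := by
        have htne : t'.Nonempty := Finset.card_pos.mp (by omega)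
        have := Finset.sum_pos
          (fun i (_ : i ∈ t') => pow_pos (show 0 < q by omega) (i : ℕ)) htne
        omega
      have hzU : z < U := by
        obtain ⟨i, hi⟩ : ∃ i : Fin n, i ∉ t' := by
          by_contra hall
          push_neg at hall
          have : t' = Finset.univ := Finset.eq_univ_iff_forall.mpr hall
          rw [this, Finset.card_univ, Fintype.card_fin] at ht'c
          omega
        have hlt2 := Finset.sum_lt_sum_of_subset (f := fun j : Fin n => q ^ (j : ℕ))
          (Finset.subset_univ t') (Finset.mem_univ i) hi
          (pow_pos (show 0 < q by omega) (i : ℕ)) (fun j _ _ => Nat.zero_le _)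
        rw [Fin.sum_univ_eq_sum_range (fun i => q ^ i) n, ← hU] at hlt2
        exact hlt2
      have hzN : z < N := by omega
      have hfz : f ((z : ℕ) : ZMod N) = 1 := (hiff z hzN).mpr ⟨w', hw', t', ht'c, rfl⟩
      have hzy := hdper ((z : ℕ) : ZMod N)
      rw [hdU] at hzy
      have hcast : ((z : ℕ) : ZMod N) + ((U : ℕ) : ZMod N) = ((z + U : ℕ) : ZMod N) := by
        push_cast; ring
      rw [hcast] at hzy
      have hzUN : z + U < N := by omega
      have hbound := hΩb (z + U) ((hiff (z + U) hzUN).mp (by rw [hzy]; exact hfz))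
      omega
    -- hence S = {0, n}, contradiction
    have hq3' : q = 3 := by
      by_contra hne
      have h3U : 3 * U ≤ (q - 1) * U := Nat.mul_le_mul_right U (by omega)
      rw [← hNU] at h3U
      omega
    have hSeq : S = {0, n} := by
      ext w'
      simp only [Finset.mem_insert, Finset.mem_singleton]
      constructor
      · exact fun hw' => hwall w' hw'
      · rintro (rfl | rfl)
        exacts [h0S, hnS]
    exact hq3S hq3' hSeq
  -- conclude
  have hNper : IsPeriodicZMod f N := by
    intro i
    rw [ZMod.natCast_self, add_zero]
  have hmem : N ∈ {r : ℕ | 0 < r ∧ IsPeriodicZMod f r} := ⟨by omega, hNper⟩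
  unfold leastPeriod
  refine le_antisymm (Nat.sInf_le hmem) (le_csInf ⟨N, hmem⟩ ?_)
  rintro r ⟨hr0, hrper⟩
  exact key r hr0 hrper
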